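/- Let σ > 0, r, q ∈ ℝ, β ∈ ℝ, T > 0, and define μ(β) = −r + β[r − q − σ²/2·(1−β)]. For X > 0 and 0 ≤ t < T, the function V(X,t) = X^β·e^{μ(β)(T−t)}·N(a₂(X,t)), with a₂(X,t) = (ln(X/K) + (r−q−σ²/2)(T−t) + σ²β(T−t))/(σ√(T−t)) and K > 0, satisfies the Black-Scholes equation ∂V/∂t + ½σ²X²∂²V/∂X² + (r−q)X∂V/∂X − rV = 0 on X > 0, 0 < t < T, and for fixed X ≠ K, lim_{t→T−} V(X,t) = X^β·1{X > K}. -/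

import Mathlib

open Real Set Filter Topology MeasureTheory

noncomputable def stdNormalCDF (x : ℝ) : ℝ :=
  (Real.sqrt (2 * Real.pi))⁻¹ * ∫ t in Set.Iic x, Real.exp (-t ^ 2 / 2)

noncomputable def npdf (x : ℝ) : ℝ := (Real.sqrt (2 * Real.pi))⁻¹ * Real.exp (-x ^ 2 / 2)

lemma gauss_integrable : Integrable (fun t : ℝ => Real.exp (-t ^ 2 / 2)) := by
  have h := integrable_exp_neg_mul_sq (by norm_num : (0:ℝ) < 1/2)
  refine h.congr ?_
  filter_upwards with t
  ring_nf

lemma gauss_total : (∫ t : ℝ, Real.exp (-t ^ 2 / 2)) = Real.sqrt (2 * Real.pi) := by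
  have h := integral_gaussian (1/2 : ℝ)
  rw [show (π / (1/2 : ℝ)) = 2 * π by ring] at h
  rw [← h]
  congr 1 with t
  ring_nf

lemma hasDerivAt_stdNormalCDF (x : ℝ) : HasDerivAt stdNormalCDF (npdf x) x := by
  have hc : Continuous fun t : ℝ => Real.exp (-t ^ 2 / 2) := by continuity
  have key : HasDerivAt (fun y : ℝ => ∫ t in (0:ℝ)..y, Real.exp (-t ^ 2 / 2))
      (Real.exp (-x ^ 2 / 2)) x :=
    intervalIntegral.integral_hasDerivAt_right (hc.intervalIntegrable _ _)
      (hc.stronglyMeasurableAtFilter _ _) hc.continuousAt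
  have heq : ∀ y : ℝ, stdNormalCDF y =
      (Real.sqrt (2 * Real.pi))⁻¹ * ((∫ t in Set.Iic (0:ℝ), Real.exp (-t ^ 2 / 2)) +
        ∫ t in (0:ℝ)..y, Real.exp (-t ^ 2 / 2)) := by
    intro y
    rw [stdNormalCDF, ← intervalIntegral.integral_Iic_sub_Iic
      (gauss_integrable.integrableOn) (gauss_integrable.integrableOn)]
    ring
  have h2 : HasDerivAt (fun y : ℝ => (Real.sqrt (2 * Real.pi))⁻¹ *
      ((∫ t in Set.Iic (0:ℝ), Real.exp (-t ^ 2 / 2)) + ∫ t in (0:ℝ)..y, Real.exp (-t ^ 2 / 2)))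
      ((Real.sqrt (2 * Real.pi))⁻¹ * Real.exp (-x ^ 2 / 2)) x := by
    simpa using ((key.const_add (∫ t in Set.Iic (0:ℝ), Real.exp (-t ^ 2 / 2))).const_mul
      ((Real.sqrt (2 * Real.pi))⁻¹))
  exact h2.congr_of_eventuallyEq (Filter.Eventually.of_forall fun y => (heq y))

lemma tendsto_stdNormalCDF_atTop : Tendsto stdNormalCDF atTop (𝓝 1) := by
  have hcov : AECover (volume : Measure ℝ) atTop (fun x => Set.Iic x) :=
    aecover_Iic tendsto_id
  have h := hcov.integral_tendsto_of_countably_generated gauss_integrable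
  have h2 : Tendsto stdNormalCDF atTop
      (𝓝 ((Real.sqrt (2 * Real.pi))⁻¹ * ∫ t : ℝ, Real.exp (-t ^ 2 / 2))) :=
    h.const_mul _
  rw [gauss_total, inv_mul_cancel₀ (by positivity)] at h2
  exact h2

lemma tendsto_stdNormalCDF_atBot : Tendsto stdNormalCDF atBot (𝓝 0) := by
  have hcov : AECover (volume : Measure ℝ) atBot (fun x => Set.Ioi x) :=
    aecover_Ioi tendsto_id
  have h := hcov.integral_tendsto_of_countably_generated gauss_integrable
  have hsplit : ∀ x : ℝ, (∫ t in Set.Iic x, Real.exp (-t ^ 2 / 2)) =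
      (∫ t : ℝ, Real.exp (-t ^ 2 / 2)) - ∫ t in Set.Ioi x, Real.exp (-t ^ 2 / 2) := by
    intro x
    have := intervalIntegral.integral_Iic_add_Ioi (b := x) gauss_integrable.integrableOn
      gauss_integrable.integrableOn
    linarith
  have h3 : Tendsto (fun x => ∫ t in Set.Iic x, Real.exp (-t ^ 2 / 2)) atBot (𝓝 0) := by
    have := (tendsto_const_nhds (x := ∫ t : ℝ, Real.exp (-t ^ 2 / 2)) (f := atBot)).sub h
    simpa [← hsplit] using this
  have h4 := h3.const_mul ((Real.sqrt (2 * Real.pi))⁻¹)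
  have : stdNormalCDF = fun x => (Real.sqrt (2 * Real.pi))⁻¹ * ∫ t in Set.Iic x, Real.exp (-t ^ 2 / 2) := rfl
  rw [this]
  simpa using h4

lemma hasDerivAt_npdf (x : ℝ) : HasDerivAt npdf (-x * npdf x) x := by
  have h1 : HasDerivAt (fun z : ℝ => -z ^ 2 / 2) (-x) x := by
    have := ((hasDerivAt_pow 2 x).neg).div_const 2
    simpa using this.congr_deriv (by ring)
  have h2 := (h1.exp).const_mul ((Real.sqrt (2 * Real.pi))⁻¹)
  exact h2.congr_deriv (by unfold npdf; ring)

set_option maxHeartbeats 1600000 in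
theorem power_binary_solution (σ r q β T K : ℝ) (hσ : 0 < σ) (hT : 0 < T) (hK : 0 < K)
    (μ : ℝ) (hμ : μ = -r + β * (r - q - σ ^ 2 / 2 * (1 - β)))
    (V : ℝ → ℝ → ℝ)
    (hV : ∀ X > 0, ∀ t < T,
      V X t = X ^ β * Real.exp (μ * (T - t)) *
        stdNormalCDF ((Real.log (X / K) + (r - q - σ ^ 2 / 2) * (T - t) + σ ^ 2 * β * (T - t)) /
          (σ * Real.sqrt (T - t)))) :
    (∀ X > 0, ∀ t ∈ Set.Ioo (0 : ℝ) T,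
      deriv (fun s => V X s) t +
        (1 / 2) * σ ^ 2 * X ^ 2 * deriv (deriv (fun Y => V Y t)) X +
        (r - q) * X * deriv (fun Y => V Y t) X - r * V X t = 0) ∧
    ∀ X > 0, X ≠ K →
      Filter.Tendsto (fun t => V X t) (nhdsWithin T (Set.Iio T))
        (nhds (X ^ β * if K < X then 1 else 0)) := by
  have hKne : K ≠ 0 := ne_of_gt hK
  constructor
  · rintro X hX t ⟨ht0, htT⟩
    have hτ : 0 < T - t := sub_pos.mpr htT
    have hsq : 0 < Real.sqrt (T - t) := Real.sqrt_pos.mpr hτ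
    have hsq2 : Real.sqrt (T - t) ^ 2 = T - t := Real.sq_sqrt hτ.le
    -- time derivative
    have hTs : HasDerivAt (fun s : ℝ => T - s) (-1) t := (hasDerivAt_id t).const_sub T
    have hsqt : HasDerivAt (fun s => Real.sqrt (T - s)) (1 / (2 * Real.sqrt (T - t)) * -1) t :=
      (Real.hasDerivAt_sqrt (ne_of_gt hτ)).comp t hTs
    have hnum_t : HasDerivAt
        (fun s => Real.log (X / K) + (r - q - σ ^ 2 / 2) * (T - s) + σ ^ 2 * β * (T - s))
        ((r - q - σ ^ 2 / 2) * -1 + σ ^ 2 * β * -1) t :=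
      ((hTs.const_mul (r - q - σ ^ 2 / 2)).const_add (Real.log (X / K))).add
        (hTs.const_mul (σ ^ 2 * β))
    have hden_t : HasDerivAt (fun s => σ * Real.sqrt (T - s))
        (σ * (1 / (2 * Real.sqrt (T - t)) * -1)) t := hsqt.const_mul σ
    have hd_t : HasDerivAt
        (fun s => (Real.log (X / K) + (r - q - σ ^ 2 / 2) * (T - s) + σ ^ 2 * β * (T - s)) /
          (σ * Real.sqrt (T - s)))
        ((((r - q - σ ^ 2 / 2) * -1 + σ ^ 2 * β * -1) * (σ * Real.sqrt (T - t)) -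
          (Real.log (X / K) + (r - q - σ ^ 2 / 2) * (T - t) + σ ^ 2 * β * (T - t)) *
            (σ * (1 / (2 * Real.sqrt (T - t)) * -1))) / (σ * Real.sqrt (T - t)) ^ 2) t :=
      hnum_t.div hden_t (by positivity)
    set D : ℝ := (Real.log (X / K) + (r - q - σ ^ 2 / 2) * (T - t) + σ ^ 2 * β * (T - t)) /
      (σ * Real.sqrt (T - t)) with hD
    have hN_t : HasDerivAt
        (fun s => stdNormalCDF ((Real.log (X / K) + (r - q - σ ^ 2 / 2) * (T - s) +
          σ ^ 2 * β * (T - s)) / (σ * Real.sqrt (T - s))))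
        (npdf D * ((((r - q - σ ^ 2 / 2) * -1 + σ ^ 2 * β * -1) * (σ * Real.sqrt (T - t)) -
          (Real.log (X / K) + (r - q - σ ^ 2 / 2) * (T - t) + σ ^ 2 * β * (T - t)) *
            (σ * (1 / (2 * Real.sqrt (T - t)) * -1))) / (σ * Real.sqrt (T - t)) ^ 2)) t :=
      by have h := (hasDerivAt_stdNormalCDF D).comp t hd_t; exact h
    have hE_t : HasDerivAt (fun s => Real.exp (μ * (T - s)))
        (Real.exp (μ * (T - t)) * (μ * -1)) t := (hTs.const_mul μ).exp
    have hW_t : HasDerivAt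
        (fun s => X ^ β * Real.exp (μ * (T - s)) *
          stdNormalCDF ((Real.log (X / K) + (r - q - σ ^ 2 / 2) * (T - s) +
            σ ^ 2 * β * (T - s)) / (σ * Real.sqrt (T - s))))
        (X ^ β * (Real.exp (μ * (T - t)) * (μ * -1)) * stdNormalCDF D +
          X ^ β * Real.exp (μ * (T - t)) *
          (npdf D * ((((r - q - σ ^ 2 / 2) * -1 + σ ^ 2 * β * -1) * (σ * Real.sqrt (T - t)) -
            (Real.log (X / K) + (r - q - σ ^ 2 / 2) * (T - t) + σ ^ 2 * β * (T - t)) *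
              (σ * (1 / (2 * Real.sqrt (T - t)) * -1))) / (σ * Real.sqrt (T - t)) ^ 2))) t :=
      (hE_t.const_mul (X ^ β)).mul hN_t
    have hVt : deriv (fun s => V X s) t =
        X ^ β * (Real.exp (μ * (T - t)) * (μ * -1)) * stdNormalCDF D +
          X ^ β * Real.exp (μ * (T - t)) *
          (npdf D * ((((r - q - σ ^ 2 / 2) * -1 + σ ^ 2 * β * -1) * (σ * Real.sqrt (T - t)) -
            (Real.log (X / K) + (r - q - σ ^ 2 / 2) * (T - t) + σ ^ 2 * β * (T - t)) *
              (σ * (1 / (2 * Real.sqrt (T - t)) * -1))) / (σ * Real.sqrt (T - t)) ^ 2)) := by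
      have heq : (fun s => V X s) =ᶠ[𝓝 t]
          (fun s => X ^ β * Real.exp (μ * (T - s)) *
            stdNormalCDF ((Real.log (X / K) + (r - q - σ ^ 2 / 2) * (T - s) +
              σ ^ 2 * β * (T - s)) / (σ * Real.sqrt (T - s)))) := by
        filter_upwards [Iio_mem_nhds htT] with s hs using hV X hX s hs
      rw [heq.deriv_eq]
      exact hW_t.deriv
    -- first space derivative, at any Y > 0
    have hg : ∀ Y : ℝ, 0 < Y → HasDerivAt (fun Z => V Z t)
        (Real.exp (μ * (T - t)) * (β * Y ^ (β - 1) *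
          stdNormalCDF ((Real.log (Y / K) + (r - q - σ ^ 2 / 2) * (T - t) +
            σ ^ 2 * β * (T - t)) / (σ * Real.sqrt (T - t))) +
          Y ^ (β - 1) * npdf ((Real.log (Y / K) + (r - q - σ ^ 2 / 2) * (T - t) +
            σ ^ 2 * β * (T - t)) / (σ * Real.sqrt (T - t))) / (σ * Real.sqrt (T - t)))) Y := by
      intro Y hY
      have hdiv : HasDerivAt (fun Z : ℝ => Z / K) (1 / K) Y := by
        simpa using (hasDerivAt_id Y).div_const K
      have hlog : HasDerivAt (fun Z => Real.log (Z / K)) ((Y / K)⁻¹ * (1 / K)) Y :=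
        (Real.hasDerivAt_log (by positivity)).comp Y hdiv
      have hd_Y : HasDerivAt
          (fun Z => (Real.log (Z / K) + (r - q - σ ^ 2 / 2) * (T - t) + σ ^ 2 * β * (T - t)) /
            (σ * Real.sqrt (T - t)))
          ((Y / K)⁻¹ * (1 / K) / (σ * Real.sqrt (T - t))) Y :=
        ((hlog.add_const _).add_const _).div_const _
      have hN_Y : HasDerivAt
          (fun Z => stdNormalCDF ((Real.log (Z / K) + (r - q - σ ^ 2 / 2) * (T - t) +
            σ ^ 2 * β * (T - t)) / (σ * Real.sqrt (T - t))))
          (npdf ((Real.log (Y / K) + (r - q - σ ^ 2 / 2) * (T - t) + σ ^ 2 * β * (T - t)) /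
            (σ * Real.sqrt (T - t))) * ((Y / K)⁻¹ * (1 / K) / (σ * Real.sqrt (T - t)))) Y :=
        (hasDerivAt_stdNormalCDF _).comp Y hd_Y
      have hpow : HasDerivAt (fun Z : ℝ => Z ^ β) (β * Y ^ (β - 1)) Y :=
        Real.hasDerivAt_rpow_const (Or.inl (ne_of_gt hY))
      have hW_Y := (hpow.mul_const (Real.exp (μ * (T - t)))).mul hN_Y
      refine (hW_Y.congr_deriv ?_).congr_of_eventuallyEq ?_
      · have hpow1 : Y ^ (β - 1) = Y ^ β / Y := by
          rw [Real.rpow_sub hY, Real.rpow_one]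
        rw [hpow1]
        field_simp
      · filter_upwards [Ioi_mem_nhds hY] with Z hZ using hV Z hZ t htT
    -- second space derivative
    have hdiv : HasDerivAt (fun Z : ℝ => Z / K) (1 / K) X := by
      simpa using (hasDerivAt_id X).div_const K
    have hlog : HasDerivAt (fun Z => Real.log (Z / K)) ((X / K)⁻¹ * (1 / K)) X :=
      (Real.hasDerivAt_log (by positivity)).comp X hdiv
    have hd_Y : HasDerivAt
        (fun Z => (Real.log (Z / K) + (r - q - σ ^ 2 / 2) * (T - t) + σ ^ 2 * β * (T - t)) /
          (σ * Real.sqrt (T - t)))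
        ((X / K)⁻¹ * (1 / K) / (σ * Real.sqrt (T - t))) X :=
      ((hlog.add_const _).add_const _).div_const _
    have hN_Y : HasDerivAt
        (fun Z => stdNormalCDF ((Real.log (Z / K) + (r - q - σ ^ 2 / 2) * (T - t) +
          σ ^ 2 * β * (T - t)) / (σ * Real.sqrt (T - t))))
        (npdf D * ((X / K)⁻¹ * (1 / K) / (σ * Real.sqrt (T - t)))) X :=
      by have h := (hasDerivAt_stdNormalCDF D).comp X hd_Y; exact h
    have hF_Y : HasDerivAt
        (fun Z => npdf ((Real.log (Z / K) + (r - q - σ ^ 2 / 2) * (T - t) +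
          σ ^ 2 * β * (T - t)) / (σ * Real.sqrt (T - t))))
        (-D * npdf D * ((X / K)⁻¹ * (1 / K) / (σ * Real.sqrt (T - t)))) X :=
      by have h := (hasDerivAt_npdf D).comp X hd_Y; exact h
    have hpow' : HasDerivAt (fun Z : ℝ => Z ^ (β - 1)) ((β - 1) * X ^ (β - 1 - 1)) X :=
      Real.hasDerivAt_rpow_const (Or.inl (ne_of_gt hX))
    have ht1 := (hpow'.const_mul β).mul hN_Y
    have ht2 := (hpow'.mul hF_Y).div_const (σ * Real.sqrt (T - t))
    have hsum := (ht1.add ht2).const_mul (Real.exp (μ * (T - t)))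
    have hD2 : deriv (deriv (fun Y => V Y t)) X =
        Real.exp (μ * (T - t)) *
          ((β * ((β - 1) * X ^ (β - 1 - 1)) *
              stdNormalCDF ((Real.log (X / K) + (r - q - σ ^ 2 / 2) * (T - t) +
                σ ^ 2 * β * (T - t)) / (σ * Real.sqrt (T - t))) +
            β * X ^ (β - 1) *
              (npdf D * ((X / K)⁻¹ * (1 / K) / (σ * Real.sqrt (T - t))))) +
          ((β - 1) * X ^ (β - 1 - 1) *
              npdf ((Real.log (X / K) + (r - q - σ ^ 2 / 2) * (T - t) +
                σ ^ 2 * β * (T - t)) / (σ * Real.sqrt (T - t))) +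
            X ^ (β - 1) *
              (-D * npdf D * ((X / K)⁻¹ * (1 / K) / (σ * Real.sqrt (T - t))))) /
            (σ * Real.sqrt (T - t))) := by
      have heq2 : deriv (fun Y => V Y t) =ᶠ[𝓝 X]
          (fun Y => Real.exp (μ * (T - t)) * (β * Y ^ (β - 1) *
            stdNormalCDF ((Real.log (Y / K) + (r - q - σ ^ 2 / 2) * (T - t) +
              σ ^ 2 * β * (T - t)) / (σ * Real.sqrt (T - t))) +
            Y ^ (β - 1) * npdf ((Real.log (Y / K) + (r - q - σ ^ 2 / 2) * (T - t) +
              σ ^ 2 * β * (T - t)) / (σ * Real.sqrt (T - t))) / (σ * Real.sqrt (T - t)))) := by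
        filter_upwards [Ioi_mem_nhds hX] with Y hY using (hg Y hY).deriv
      rw [heq2.deriv_eq]
      exact hsum.deriv
    rw [hVt, hD2, (hg X hX).deriv, hV X hX t htT]
    rw [← hD]
    set NN := stdNormalCDF D with hNN
    set FF := npdf D with hFF
    rw [hD]
    set s2 := Real.sqrt (T - t) with hs2
    rw [show T - t = s2 ^ 2 from hsq2.symm]
    set L := Real.log (X / K) with hL
    have hb1 : X ^ (β - 1) = X ^ β / X := by
      rw [Real.rpow_sub hX, Real.rpow_one]
    have hb2 : X ^ (β - 1 - 1) = X ^ β / X / X := by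
      rw [Real.rpow_sub hX, Real.rpow_one, hb1]
    rw [hb1, hb2, hμ]
    set P := X ^ β with hP
    have hs2ne : s2 ≠ 0 := ne_of_gt hsq
    have hXne : X ≠ 0 := ne_of_gt hX
    have hσne : σ ≠ 0 := ne_of_gt hσ
    field_simp
    ring
  · intro X hX hXK
    have hEv : ∀ᶠ t in 𝓝[<] T, X ^ β * Real.exp (μ * (T - t)) *
        stdNormalCDF ((Real.log (X / K) + (r - q - σ ^ 2 / 2) * (T - t) + σ ^ 2 * β * (T - t)) /
          (σ * Real.sqrt (T - t))) = V X t := by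
      filter_upwards [self_mem_nhdsWithin] with t ht using (hV X hX t ht).symm
    have hτ : Tendsto (fun t => T - t) (𝓝[<] T) (𝓝[>] 0) := by
      apply tendsto_nhdsWithin_of_tendsto_nhds_of_eventually_within
      · have : Tendsto (fun t : ℝ => T - t) (𝓝 T) (𝓝 (T - T)) :=
          (continuous_const.sub continuous_id).tendsto T
        simpa using this.mono_left nhdsWithin_le_nhds
      · filter_upwards [self_mem_nhdsWithin] with t ht using sub_pos.mpr (Set.mem_Iio.mp ht)
    have hτ0 : Tendsto (fun t => T - t) (𝓝[<] T) (𝓝 0) := hτ.mono_right nhdsWithin_le_nhds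
    have hE : Tendsto (fun t => Real.exp (μ * (T - t))) (𝓝[<] T) (𝓝 1) := by
      have : Tendsto (fun t => μ * (T - t)) (𝓝[<] T) (𝓝 (μ * 0)) := hτ0.const_mul μ
      simpa [Function.comp_def] using (Real.continuous_exp.tendsto 0).comp (by simpa using this)
    have hden : Tendsto (fun t => σ * Real.sqrt (T - t)) (𝓝[<] T) (𝓝[>] 0) := by
      apply tendsto_nhdsWithin_of_tendsto_nhds_of_eventually_within
      · have h1 : Tendsto (fun t => Real.sqrt (T - t)) (𝓝[<] T) (𝓝 0) := by
          have := (Real.continuous_sqrt.tendsto 0).comp hτ0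
          simpa [Function.comp_def] using this
        simpa using h1.const_mul σ
      · filter_upwards [self_mem_nhdsWithin] with t ht
        have h5 : 0 < T - t := sub_pos.mpr (Set.mem_Iio.mp ht)
        exact Set.mem_Ioi.mpr (mul_pos hσ (Real.sqrt_pos.mpr h5))
    have hinv : Tendsto (fun t => (σ * Real.sqrt (T - t))⁻¹) (𝓝[<] T) atTop :=
      tendsto_inv_nhdsGT_zero.comp hden
    have hnum : Tendsto
        (fun t => Real.log (X / K) + (r - q - σ ^ 2 / 2) * (T - t) + σ ^ 2 * β * (T - t))
        (𝓝[<] T) (𝓝 (Real.log (X / K))) := by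
      have h0 := (tendsto_const_nhds (x := Real.log (X / K)) (f := 𝓝[<] T)).add
        ((hτ0.const_mul (r - q - σ ^ 2 / 2)).add (hτ0.const_mul (σ ^ 2 * β)))
      simp only [mul_zero, add_zero] at h0
      exact h0.congr (fun t => by ring)
    rcases lt_or_gt_of_ne hXK with hlt | hgt
    · -- X < K : payoff 0
      have hA : Real.log (X / K) < 0 :=
        Real.log_neg (by positivity) ((div_lt_one hK).mpr hlt)
      have hd : Tendsto (fun t => (Real.log (X / K) + (r - q - σ ^ 2 / 2) * (T - t) +
          σ ^ 2 * β * (T - t)) / (σ * Real.sqrt (T - t))) (𝓝[<] T) atBot := by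
        have := Filter.Tendsto.neg_mul_atTop hA hnum hinv
        simpa [div_eq_mul_inv] using this
      have hN : Tendsto (fun t => stdNormalCDF ((Real.log (X / K) +
          (r - q - σ ^ 2 / 2) * (T - t) + σ ^ 2 * β * (T - t)) / (σ * Real.sqrt (T - t))))
          (𝓝[<] T) (𝓝 0) := (tendsto_stdNormalCDF_atBot.comp hd).congr fun t => rfl
      have hfin := (tendsto_const_nhds (x := X ^ β) (f := 𝓝[<] T)).mul hE |>.mul hN
      rw [if_neg (not_lt.mpr hlt.le)]
      refine Filter.Tendsto.congr' hEv ?_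
      simpa using hfin
    · -- K < X : payoff 1
      have hA : 0 < Real.log (X / K) :=
        Real.log_pos ((one_lt_div hK).mpr hgt)
      have hd : Tendsto (fun t => (Real.log (X / K) + (r - q - σ ^ 2 / 2) * (T - t) +
          σ ^ 2 * β * (T - t)) / (σ * Real.sqrt (T - t))) (𝓝[<] T) atTop := by
        have := Filter.Tendsto.pos_mul_atTop hA hnum hinv
        simpa [div_eq_mul_inv] using this
      have hN : Tendsto (fun t => stdNormalCDF ((Real.log (X / K) +
          (r - q - σ ^ 2 / 2) * (T - t) + σ ^ 2 * β * (T - t)) / (σ * Real.sqrt (T - t))))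
          (𝓝[<] T) (𝓝 1) := (tendsto_stdNormalCDF_atTop.comp hd).congr fun t => rfl
      have hfin := (tendsto_const_nhds (x := X ^ β) (f := 𝓝[<] T)).mul hE |>.mul hN
      rw [if_pos hgt]
      refine Filter.Tendsto.congr' hEv ?_
      simpa using hfin
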